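/- arXiv:math/0609739 — 2 statements merged into one kernel-verified Lean document; each statement's English description precedes it below -/
import Mathlib

section
/- Let c, C, δ be positive real numbers and let a : [1, ∞) → ℂ be a twice differentiable function such that |a″(y) − c²·a(y)| ≤ C·e^{−δy} for all y ≥ 1, and such that ∫₁^∞ |a(y)|²·y^{−2} dy < ∞. Then a decays exponentially: there exist constants C′ > 0 and δ′ > 0 such that |a(y)| ≤ C′·e^{−δ′y} for all y ≥ 1. -/
open Real MeasureTheory Set Filter

lemma normE (b t : ℝ) : ‖Complex.exp ((b:ℂ) * (t:ℂ))‖ = Real.exp (b * t) := by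
  simp [Complex.norm_exp]

lemma hasDerivAtE (b t : ℝ) :
    HasDerivAt (fun t : ℝ => Complex.exp ((b:ℂ) * t)) ((b:ℂ) * Complex.exp ((b:ℂ) * t)) t := by
  have h1 : HasDerivAt (fun t : ℝ => ((b:ℂ) * t)) (b:ℂ) t := by
    simpa using (Complex.ofRealCLM.hasDerivAt (x := t)).const_mul (b:ℂ)
  simpa [mul_comm] using h1.cexp

lemma integral_exp_mul_aux {β : ℝ} (hβ : 0 < β) (u v : ℝ) :
    ∫ t in u..v, Real.exp (β * t) = (Real.exp (β * v) - Real.exp (β * u)) / β := by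
  have hd : ∀ t ∈ Set.uIcc u v, HasDerivAt (fun t => Real.exp (β * t) / β) (Real.exp (β * t)) t := by
    intro t _
    have := (((hasDerivAt_id t).const_mul β).exp).div_const β
    simpa [mul_div_assoc, mul_div_cancel_right₀ _ hβ.ne'] using this
  have := intervalIntegral.integral_eq_sub_of_hasDerivAt hd
    ((Real.continuous_exp.comp (continuous_const.mul continuous_id)).intervalIntegrable u v)
  rw [this]; ring

lemma integral_exp_neg_mul_Ioi_aux {b : ℝ} (hb : 0 < b) (y : ℝ) :
    ∫ t in Set.Ioi y, Real.exp (-b * t) = Real.exp (-b * y) / b := by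
  have hd : ∀ x ∈ Set.Ioi y, HasDerivAt (fun t => -Real.exp (-b * t) / b) (Real.exp (-b * x)) x := by
    intro x _
    have := ((((hasDerivAt_id x).const_mul (-b)).exp).neg).div_const b
    refine this.congr_deriv ?_
    field_simp
    rfl
  have hcont : ContinuousWithinAt (fun t => -Real.exp (-b * t) / b) (Set.Ici y) y :=
    (Continuous.continuousWithinAt (by continuity))
  have hint : IntegrableOn (fun t => Real.exp (-b * t)) (Set.Ioi y) :=
    exp_neg_integrableOn_Ioi y hb
  have htend : Tendsto (fun t => -Real.exp (-b * t) / b) atTop (nhds 0) := by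
    have : Tendsto (fun t : ℝ => Real.exp (-b * t)) atTop (nhds 0) := by
      simpa [neg_mul] using Real.tendsto_exp_comp_nhds_zero.mpr
        (Filter.tendsto_neg_atBot_iff.mpr (Filter.Tendsto.const_mul_atTop hb tendsto_id))
    simpa using (this.neg).div_const b
  have := MeasureTheory.integral_Ioi_of_hasDerivAt_of_tendsto hcont hd hint htend
  rw [this]; field_simp; ring

set_option maxHeartbeats 2000000 in
/-- Quantitative ODE estimate for nonzero frequency Fourier coefficients: if
`a : [1, ∞) → ℂ` is twice differentiable with `|a″(y) − c²·a(y)| ≤ C·e^{−δy}` and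
`∫₁^∞ |a(y)|²·y^{−2} dy < ∞`, then `a` decays exponentially. -/
theorem exp_decay_of_ode_and_L2 (c C δ : ℝ) (hc : 0 < c) (hC : 0 < C) (hδ : 0 < δ)
    (a a' a'' : ℝ → ℂ)
    (ha : ∀ y ∈ Set.Ici (1 : ℝ), HasDerivWithinAt a (a' y) (Set.Ici 1) y)
    (ha' : ∀ y ∈ Set.Ici (1 : ℝ), HasDerivWithinAt a' (a'' y) (Set.Ici 1) y)
    (hode : ∀ y ∈ Set.Ici (1 : ℝ), ‖a'' y - ((c : ℂ)) ^ 2 * a y‖ ≤ C * Real.exp (-δ * y))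
    (hL2 : IntegrableOn (fun y : ℝ => ‖a y‖ ^ 2 / y ^ 2) (Set.Ici 1)) :
    ∃ C' > 0, ∃ δ' > 0, ∀ y ∈ Set.Ici (1 : ℝ), ‖a y‖ ≤ C' * Real.exp (-δ' * y) := by
  have hεδ2 : 0 < δ/2 := by positivity
  set ε : ℝ := min (δ/2) (c/2) with hεdef
  have hε : 0 < ε := lt_min (by positivity) (by positivity)
  have hεδ : ε ≤ δ := (min_le_left _ _).trans (by linarith)
  have hεc2 : ε ≤ c/2 := min_le_right _ _
  set β : ℝ := c - ε with hβdef
  have hβ : 0 < β := by simp only [hβdef]; linarith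
  have hβc : c - δ ≤ β := by simp only [hβdef]; linarith
  set f : ℝ → ℂ := fun y => a'' y - (c:ℂ)^2 * a y with hfdef
  set g : ℝ → ℂ := fun y => a' y + (c:ℂ) * a y with hgdef
  set h : ℝ → ℂ := fun y => a' y - (c:ℂ) * a y with hhdef
  set G : ℝ → ℂ := fun y => Complex.exp (((-c : ℝ):ℂ) * y) * g y with hGdef
  set H : ℝ → ℂ := fun y => Complex.exp ((c:ℂ) * y) * h y with hHdef
  set φ : ℝ → ℂ := fun t => Complex.exp (((-c : ℝ):ℂ) * t) * f t with hφdef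
  set ψ : ℝ → ℂ := fun t => Complex.exp ((c:ℂ) * t) * f t with hψdef
  have hacont : ContinuousOn a (Ici 1) := fun y hy => (ha y hy).continuousWithinAt
  have hfbound : ∀ y ∈ Ici (1:ℝ), ‖f y‖ ≤ C * Real.exp (-δ * y) := hode
  -- measurability of f on Ici 1
  have hfmeas : AEStronglyMeasurable f (volume.restrict (Ici 1)) := by
    have hm : AEStronglyMeasurable a'' (volume.restrict (Ici 1)) := by
      apply (stronglyMeasurable_derivWithin_Ici a').aestronglyMeasurable.congr
      refine (ae_restrict_iff' measurableSet_Ici).2 (Filter.Eventually.of_forall fun y hy => ?_)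
      exact ((ha' y hy).mono (Set.Ici_subset_Ici.2 hy)).derivWithin
        ((uniqueDiffOn_Ici y) y Set.self_mem_Ici)
    exact hm.sub ((hacont.aestronglyMeasurable measurableSet_Ici).const_mul _)
  -- φ integrable on Ioi 1
  have hφnorm : ∀ t : ℝ, ‖φ t‖ = Real.exp (-c * t) * ‖f t‖ := by
    intro t; rw [hφdef]; simp only []; rw [norm_mul, normE]
  have hψnorm : ∀ t : ℝ, ‖ψ t‖ = Real.exp (c * t) * ‖f t‖ := by
    intro t; rw [hψdef]; simp only []; rw [norm_mul, normE]
  have hφle : ∀ t ∈ Ici (1:ℝ), ‖φ t‖ ≤ C * Real.exp (-(c+δ) * t) := by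
    intro t ht
    rw [hφnorm t]
    calc Real.exp (-c*t) * ‖f t‖ ≤ Real.exp (-c*t) * (C * Real.exp (-δ*t)) :=
          mul_le_mul_of_nonneg_left (hfbound t ht) (Real.exp_pos _).le
      _ = C * Real.exp (-(c+δ)*t) := by
          rw [mul_left_comm, ← Real.exp_add]; congr 1; ring
  have hφmeas : AEStronglyMeasurable φ (volume.restrict (Ici 1)) :=
    ((Complex.continuous_exp.comp (continuous_const.mul Complex.continuous_ofReal)).aestronglyMeasurable).mul hfmeas
  have hψmeas : AEStronglyMeasurable ψ (volume.restrict (Ici 1)) :=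
    ((Complex.continuous_exp.comp (continuous_const.mul Complex.continuous_ofReal)).aestronglyMeasurable).mul hfmeas
  have hφint : IntegrableOn φ (Ioi 1) := by
    refine Integrable.mono (g := fun t => C * Real.exp (-(c+δ) * t))
      ((exp_neg_integrableOn_Ioi 1 (by positivity : (0:ℝ) < c + δ)).const_mul C)
      (hφmeas.mono_measure (Measure.restrict_mono Ioi_subset_Ici_self le_rfl)) ?_
    refine (ae_restrict_iff' measurableSet_Ioi).2 (Filter.Eventually.of_forall fun t ht => ?_)
    rw [Real.norm_eq_abs, abs_of_pos (by positivity)]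
    exact hφle t (Set.mem_Ici.2 (le_of_lt ht))
  -- derivative of G
  have hG' : ∀ y ∈ Ici (1:ℝ), HasDerivWithinAt G (φ y) (Ici 1) y := by
    intro y hy
    have hgd : HasDerivWithinAt g (a'' y + (c:ℂ) * a' y) (Ici 1) y :=
      (ha' y hy).add ((ha y hy).const_mul _)
    have := ((hasDerivAtE (-c) y).hasDerivWithinAt).mul hgd
    refine this.congr_deriv ?_
    simp only [hφdef, hfdef, hgdef]
    push_cast
    ring
  have hH' : ∀ y ∈ Ici (1:ℝ), HasDerivWithinAt H (ψ y) (Ici 1) y := by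
    intro y hy
    have hhd : HasDerivWithinAt h (a'' y - (c:ℂ) * a' y) (Ici 1) y :=
      (ha' y hy).sub ((ha y hy).const_mul _)
    have h0 := (hasDerivAtE c y).hasDerivWithinAt.mul hhd
    refine h0.congr_deriv ?_
    simp only [hψdef, hfdef, hhdef]
    push_cast
    ring
  -- FTC
  have hftc : ∀ (F D : ℝ → ℂ), (∀ y ∈ Ici (1:ℝ), HasDerivWithinAt F (D y) (Ici 1) y) →
      ∀ y, 1 ≤ y → IntervalIntegrable D volume 1 y → F y - F 1 = ∫ t in (1:ℝ)..y, D t := by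
    intro F D hF y hy hint
    rw [intervalIntegral.integral_eq_sub_of_hasDeriv_right_of_le hy
      (fun t ht => ((hF t ht.1).continuousWithinAt).mono Icc_subset_Ici_self)
      (fun x hx => (hF x hx.1.le).mono (fun t ht => (hx.1.trans ht).le)) hint]
  have hφii : ∀ y, 1 ≤ y → IntervalIntegrable φ volume 1 y := by
    intro y hy
    rw [intervalIntegrable_iff, Set.uIoc_of_le hy]
    exact hφint.mono_set Set.Ioc_subset_Ioi_self
  have hψii : ∀ y, 1 ≤ y → IntervalIntegrable ψ volume 1 y := by
    intro y hy
    have hbint : IntegrableOn (fun t => C * Real.exp (c * t)) (Ioc 1 y) :=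
      (continuous_const.mul (Real.continuous_exp.comp (continuous_const.mul continuous_id))).integrableOn_Ioc
    have hm : AEStronglyMeasurable ψ (volume.restrict (Ioc 1 y)) :=
      hψmeas.mono_measure (Measure.restrict_mono (Set.Ioc_subset_Ioi_self.trans Set.Ioi_subset_Ici_self) le_rfl)
    have hint : IntegrableOn ψ (Ioc 1 y) := by
      refine Integrable.mono hbint hm ?_
      refine (ae_restrict_iff' measurableSet_Ioc).2 (Filter.Eventually.of_forall fun t ht => ?_)
      rw [Real.norm_eq_abs, abs_of_pos (by positivity), hψnorm t]
      calc Real.exp (c*t) * ‖f t‖ ≤ Real.exp (c*t) * (C * Real.exp (-δ*t)) :=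
            mul_le_mul_of_nonneg_left (hfbound t ht.1.le) (Real.exp_pos _).le
        _ ≤ C * Real.exp (c*t) := by
            rw [mul_left_comm, ← Real.exp_add]
            have h2 : Real.exp (c*t + -δ*t) ≤ Real.exp (c*t) :=
              Real.exp_le_exp.2 (by nlinarith [ht.1])
            nlinarith [h2, hC]
    rw [intervalIntegrable_iff, Set.uIoc_of_le hy]
    exact hint
  -- tail integral
  set T : ℝ → ℂ := fun y => ∫ t in Ioi y, φ t with hTdef
  have hTbound : ∀ y, 1 ≤ y → ‖T y‖ ≤ C / (c+δ) * Real.exp (-(c+δ) * y) := by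
    intro y hy
    have h1 : ‖T y‖ ≤ ∫ t in Ioi y, C * Real.exp (-(c+δ)*t) := by
      refine MeasureTheory.norm_integral_le_of_norm_le
        ((exp_neg_integrableOn_Ioi y (by positivity : (0:ℝ) < c + δ)).const_mul C) ?_
      refine (ae_restrict_iff' measurableSet_Ioi).2 (Filter.Eventually.of_forall fun t ht => ?_)
      exact hφle t (hy.trans ht.le)
    rw [MeasureTheory.integral_const_mul, integral_exp_neg_mul_Ioi_aux (by positivity : (0:ℝ) < c+δ)] at h1
    calc ‖T y‖ ≤ C * (Real.exp (-(c+δ)*y) / (c+δ)) := h1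
      _ = C / (c+δ) * Real.exp (-(c+δ)*y) := by ring
  -- splitting
  set L : ℂ := G 1 + T 1 with hLdef
  have hsplit : ∀ y, 1 ≤ y → G y = L - T y := by
    intro y hy
    have hunion : T 1 = (∫ t in Ioc 1 y, φ t) + T y := by
      rw [hTdef]
      simp only []
      rw [← Ioc_union_Ioi_eq_Ioi hy,
        setIntegral_union Ioc_disjoint_Ioi_same measurableSet_Ioi
          (hφint.mono_set Ioc_subset_Ioi_self) (hφint.mono_set (Ioi_subset_Ioi hy))]
    have h2 := hftc G φ hG' y hy (hφii y hy)
    rw [intervalIntegral.integral_of_le hy] at h2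
    rw [hLdef]
    linear_combination h2 - hunion
  -- h bound
  have hhnorm : ∀ y : ℝ, Real.exp (c*y) * ‖h y‖ = ‖H y‖ := by
    intro y; rw [hHdef]; simp only []; rw [norm_mul, normE]
  have hgnorm : ∀ y : ℝ, ‖g y‖ = Real.exp (c*y) * ‖G y‖ := by
    intro y
    rw [hGdef]
    simp only []
    rw [norm_mul, normE, ← mul_assoc, ← Real.exp_add]
    norm_num
  have hHbound : ∀ y, 1 ≤ y → ‖H y‖ ≤ ‖H 1‖ + C / β * Real.exp (β * y) := by
    intro y hy
    have hbcont : Continuous (fun t : ℝ => C * Real.exp (β*t)) := by fun_prop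
    have h2 : ‖∫ t in (1:ℝ)..y, ψ t‖ ≤ |∫ t in (1:ℝ)..y, C * Real.exp (β*t)| := by
      refine intervalIntegral.norm_integral_le_abs_of_norm_le ?_ (hbcont.intervalIntegrable 1 y)
      rw [Set.uIoc_of_le hy]
      refine (ae_restrict_iff' measurableSet_Ioc).2 (Filter.Eventually.of_forall fun t ht => ?_)
      rw [hψnorm t]
      calc Real.exp (c*t) * ‖f t‖ ≤ Real.exp (c*t) * (C * Real.exp (-δ*t)) :=
            mul_le_mul_of_nonneg_left (hfbound t ht.1.le) (Real.exp_pos _).le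
        _ = C * Real.exp ((c-δ)*t) := by rw [mul_left_comm, ← Real.exp_add]; congr 1; ring
        _ ≤ C * Real.exp (β*t) := by
            have h3 : Real.exp ((c-δ)*t) ≤ Real.exp (β*t) :=
              Real.exp_le_exp.2 (by nlinarith [ht.1, hβc])
            nlinarith [h3, hC]
    rw [intervalIntegral.integral_const_mul, integral_exp_mul_aux hβ] at h2
    have hnn : (0:ℝ) ≤ C * ((Real.exp (β*y) - Real.exp (β*1)) / β) := by
      have he2 := Real.exp_le_exp.2 (by nlinarith : β*1 ≤ β*y)
      exact mul_nonneg hC.le (div_nonneg (by linarith) hβ.le)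
    rw [abs_of_nonneg hnn] at h2
    have h4 := hftc H ψ hH' y hy (hψii y hy)
    have h5 : ‖H y‖ ≤ ‖H 1‖ + ‖H y - H 1‖ := by
      have := norm_sub_norm_le (H y) (H 1); linarith [abs_le.1 (abs_norm_sub_norm_le (H y) (H 1))]
    rw [h4] at h5
    have h6 : C * ((Real.exp (β*y) - Real.exp (β*1)) / β) ≤ C / β * Real.exp (β*y) := by
      have he : Real.exp (β*y) - Real.exp (β*1) ≤ Real.exp (β*y) := by
        linarith [Real.exp_pos (β*1)]
      have h7 : C / β * (Real.exp (β*y) - Real.exp (β*1)) ≤ C / β * Real.exp (β*y) :=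
        mul_le_mul_of_nonneg_left he (by positivity)
      calc C * ((Real.exp (β*y) - Real.exp (β*1)) / β)
          = C / β * (Real.exp (β*y) - Real.exp (β*1)) := by ring
        _ ≤ C / β * Real.exp (β*y) := h7
    linarith [h2, h5, h6]
  have hhbound : ∀ y, 1 ≤ y → ‖h y‖ ≤ (‖H 1‖ + C / β) * Real.exp (-ε * y) := by
    intro y hy
    have hy0 : (0:ℝ) < y := by linarith
    have h1 : Real.exp (c*y) * ‖h y‖ ≤ ‖H 1‖ + C / β * Real.exp (β * y) := by
      rw [hhnorm y]; exact hHbound y hy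
    have h2' := mul_le_mul_of_nonneg_left h1 (Real.exp_pos (-(c*y))).le
    have heq : Real.exp (-(c*y)) * (Real.exp (c*y) * ‖h y‖) = ‖h y‖ := by
      rw [← mul_assoc, ← Real.exp_add]; simp
    rw [heq] at h2'
    have hbe : Real.exp (-(c*y)) * Real.exp (β*y) = Real.exp (-ε*y) := by
      rw [← Real.exp_add]; congr 1; rw [hβdef]; ring
    have h3 : Real.exp (-(c*y)) * (‖H 1‖ + C / β * Real.exp (β * y))
        = ‖H 1‖ * Real.exp (-(c*y)) + C / β * Real.exp (-ε * y) := by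
      linear_combination (C/β) * hbe
    rw [h3] at h2'
    have h4 : Real.exp (-(c*y)) ≤ Real.exp (-ε * y) := by
      apply Real.exp_le_exp.2
      have hεc : ε ≤ c := by linarith
      nlinarith
    have h5 : ‖H 1‖ * Real.exp (-(c*y)) ≤ ‖H 1‖ * Real.exp (-ε*y) :=
      mul_le_mul_of_nonneg_left h4 (norm_nonneg _)
    calc ‖h y‖ ≤ ‖H 1‖ * Real.exp (-ε*y) + C / β * Real.exp (-ε * y) := by linarith
      _ = (‖H 1‖ + C / β) * Real.exp (-ε * y) := by ring
  -- relation a = (g - h)/(2c)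
  have hanorm : ∀ y : ℝ, 2*c*‖a y‖ = ‖g y - h y‖ := by
    intro y
    have : g y - h y = ((2*c:ℝ):ℂ) * a y := by
      rw [hgdef, hhdef]; push_cast; ring
    rw [this, norm_mul, Complex.norm_real, Real.norm_eq_abs, abs_of_pos (by positivity)]
  set M : ℝ := ‖H 1‖ + C / β with hMdef
  have hM : 0 ≤ M := by positivity
  set K : ℝ := C/(c+δ) + M with hKdef
  have hK : 0 ≤ K := by positivity
  by_cases hL : L = 0
  · -- decay case
    refine ⟨K / (2*c) + 1, by positivity, ε, hε, ?_⟩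
    intro y hy
    have hy0 : (0:ℝ) < y := by linarith [mem_Ici.1 hy]
    have hy1 : (1:ℝ) ≤ y := hy
    have hGy : G y = - T y := by rw [hsplit y hy1, hL, zero_sub]
    have hgb : ‖g y‖ ≤ C/(c+δ) * Real.exp (-δ * y) := by
      rw [hgnorm y, hGy, norm_neg]
      calc Real.exp (c*y) * ‖T y‖ ≤ Real.exp (c*y) * (C/(c+δ) * Real.exp (-(c+δ)*y)) :=
            mul_le_mul_of_nonneg_left (hTbound y hy1) (Real.exp_pos _).le
        _ = C/(c+δ) * Real.exp (-δ*y) := by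
            rw [mul_left_comm, ← Real.exp_add]; congr 2; ring
    have hhb := hhbound y hy1
    have hde : Real.exp (-δ*y) ≤ Real.exp (-ε*y) := by
      apply Real.exp_le_exp.2; nlinarith
    have h4 : 2*c*‖a y‖ ≤ K * Real.exp (-ε*y) := by
      calc 2*c*‖a y‖ = ‖g y - h y‖ := hanorm y
        _ ≤ ‖g y‖ + ‖h y‖ := norm_sub_le _ _
        _ ≤ C/(c+δ) * Real.exp (-δ*y) + M * Real.exp (-ε*y) := add_le_add hgb hhb
        _ ≤ C/(c+δ) * Real.exp (-ε*y) + M * Real.exp (-ε*y) := by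
            have : (0:ℝ) ≤ C/(c+δ) := by positivity
            nlinarith
        _ = K * Real.exp (-ε*y) := by rw [hKdef]; ring
    have h7 : ‖a y‖ ≤ K/(2*c) * Real.exp (-ε*y) := by
      rw [div_mul_eq_mul_div, le_div_iff₀ (by positivity : (0:ℝ) < 2*c)]
      linarith [h4]
    calc ‖a y‖ ≤ K/(2*c) * Real.exp (-ε*y) := h7
      _ ≤ (K/(2*c) + 1) * Real.exp (-ε*y) :=
            mul_le_mul_of_nonneg_right (by linarith) (Real.exp_pos _).le
  · -- growth case: contradiction with L2
    exfalso
    have hLpos : 0 < ‖L‖ := norm_pos_iff.2 hL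
    have hlow : ∀ y, 1 ≤ y → Real.exp (c*y) * ‖L‖ - K ≤ 2*c*‖a y‖ := by
      intro y hy
      have hy0 : (0:ℝ) < y := by linarith
      have h5 : ‖L‖ - ‖T y‖ ≤ ‖G y‖ := by
        rw [hsplit y hy]; exact norm_sub_norm_le _ _
      have h6 : Real.exp (c*y) * ‖T y‖ ≤ C/(c+δ) := by
        calc Real.exp (c*y) * ‖T y‖ ≤ Real.exp (c*y) * (C/(c+δ) * Real.exp (-(c+δ)*y)) :=
              mul_le_mul_of_nonneg_left (hTbound y hy) (Real.exp_pos _).le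
          _ = C/(c+δ) * Real.exp (-δ*y) := by
              rw [mul_left_comm, ← Real.exp_add]; congr 2; ring
          _ ≤ C/(c+δ) * 1 := by
              have : Real.exp (-δ*y) ≤ 1 := Real.exp_le_one_iff.2 (by nlinarith)
              have : (0:ℝ) ≤ C/(c+δ) := by positivity
              nlinarith
          _ = C/(c+δ) := mul_one _
      have h7 : ‖h y‖ ≤ M := by
        have := hhbound y hy
        have he1 : Real.exp (-ε*y) ≤ 1 := Real.exp_le_one_iff.2 (by nlinarith)
        nlinarith
      have h8 : Real.exp (c*y) * ‖L‖ - Real.exp (c*y) * ‖T y‖ ≤ ‖g y‖ := by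
        rw [hgnorm y, ← mul_sub]
        exact mul_le_mul_of_nonneg_left h5 (Real.exp_pos _).le
      have h9 : ‖g y‖ - ‖h y‖ ≤ 2*c*‖a y‖ := by
        rw [hanorm y]; exact norm_sub_norm_le _ _
      rw [hKdef]
      linarith
    have htend : Tendsto (fun y => Real.exp (c*y)/y) atTop atTop := by
      have h1 := Real.tendsto_exp_div_pow_atTop 1
      have h2 : Tendsto (fun y : ℝ => c * y) atTop atTop :=
        Filter.Tendsto.const_mul_atTop hc tendsto_id
      have h3 := Filter.Tendsto.const_mul_atTop hc (h1.comp h2)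
      apply h3.congr'
      filter_upwards [Filter.eventually_gt_atTop (0:ℝ)] with y hy
      have hcy : c * y ≠ 0 := by positivity
      simp only [Function.comp_apply, pow_one]
      field_simp
    obtain ⟨y₀, hy₀⟩ := Filter.eventually_atTop.1 (htend.eventually_ge_atTop ((K + 2*c)/‖L‖))
    set y₁ : ℝ := max y₀ 1 with hy₁def
    have hy₁1 : (1:ℝ) ≤ y₁ := le_max_right _ _
    have hbig : ∀ y, y₁ ≤ y → 1 ≤ ‖a y‖^2 / y^2 := by
      intro y hy
      have hy1 : (1:ℝ) ≤ y := hy₁1.trans hy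
      have hyp : (0:ℝ) < y := by linarith
      have h8 := hy₀ y ((le_max_left _ _).trans hy)
      have h9 : (K + 2*c) * y ≤ Real.exp (c*y) * ‖L‖ := by
        rw [div_le_div_iff₀ hLpos hyp] at h8
        linarith
      have h10 := hlow y hy1
      have h11 : y ≤ ‖a y‖ := by nlinarith [mul_nonneg hK (by linarith : (0:ℝ) ≤ y - 1)]
      rw [le_div_iff₀ (by positivity)]
      nlinarith [norm_nonneg (a y)]
    have hsub : IntegrableOn (fun y : ℝ => ‖a y‖^2 / y^2) (Ici y₁) :=
      hL2.mono_set (Ici_subset_Ici.2 hy₁1)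
    have hone : IntegrableOn (fun _ : ℝ => (1:ℝ)) (Ici y₁) := by
      refine Integrable.mono hsub aestronglyMeasurable_const ?_
      refine (ae_restrict_iff' measurableSet_Ici).2 (Filter.Eventually.of_forall fun y hy => ?_)
      have hb := hbig y hy
      have hyp : (0:ℝ) < y := by linarith [hy₁1.trans (mem_Ici.1 hy)]
      rw [norm_one, Real.norm_eq_abs, abs_of_nonneg (by positivity)]
      linarith
    rw [integrableOn_const_iff] at hone
    rcases hone with h1 | h1
    · norm_num at h1
    · rw [Real.volume_Ici] at h1
      exact absurd h1 (lt_irrefl _)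
end

section
/- Let C, δ be positive real numbers and let a : [1, ∞) → ℂ be a twice differentiable function such that |a″(y)| ≤ C·e^{−δy} for all y ≥ 1, and such that ∫₁^∞ |a(y)|²·y^{−2} dy < ∞. Then there exists a constant a₀ ∈ ℂ and constants C′ > 0, δ′ > 0 such that |a(y) − a₀| ≤ C′·e^{−δ′y} for all y ≥ 1; in particular a(y) converges to a₀ as y → ∞. -/
open Real MeasureTheory Set Filter Topology

lemma my_cauchy_bound {f f' : ℝ → ℂ} {K δ : ℝ} (hK : 0 ≤ K) (hδ : 0 < δ)
    (hf : ∀ y ∈ Set.Ici (1:ℝ), HasDerivWithinAt f (f' y) (Set.Ici 1) y)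
    (hb : ∀ y ∈ Set.Ici (1:ℝ), ‖f' y‖ ≤ K * Real.exp (-δ * y)) :
    ∀ z ∈ Set.Ici (1:ℝ), ∀ y, z ≤ y → ‖f y - f z‖ ≤ K / δ * Real.exp (-δ * z) := by
  intro z hz y hzy
  have hcont : ContinuousOn f (Set.Ici 1) := fun t ht => (hf t ht).continuousWithinAt
  have hIcc : Set.Icc z y ⊆ Set.Ici (1:ℝ) := fun t ht => le_trans hz ht.1
  set B : ℝ → ℝ := fun t => K / δ * Real.exp (-δ * z) - K / δ * Real.exp (-δ * t) with hBdef
  have hB : ∀ t : ℝ, HasDerivAt B (K * Real.exp (-δ * t)) t := by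
    intro t
    have h1 : HasDerivAt (fun t : ℝ => Real.exp (-δ * t)) (Real.exp (-δ * t) * (-δ)) t := by
      simpa using ((hasDerivAt_id t).const_mul (-δ)).exp
    have h2 := (h1.const_mul (K / δ)).const_sub (K / δ * Real.exp (-δ * z))
    rw [show K * Real.exp (-δ * t) = -(K / δ * (Real.exp (-δ * t) * -δ)) by
      field_simp]
    exact h2
  have key := image_norm_le_of_norm_deriv_right_le_deriv_boundary
    (f := fun t => f t - f z) (f' := f') (a := z) (b := y)
    ((hcont.mono hIcc).sub continuousOn_const)
    (fun x hx => ((hf x (hIcc ⟨hx.1, hx.2.le⟩)).mono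
      (Set.Ici_subset_Ici.mpr (hIcc ⟨hx.1, hx.2.le⟩))).sub_const _)
    (by simp [hBdef]) hB
    (fun x hx => hb x (hIcc ⟨hx.1, hx.2.le⟩))
    (Set.right_mem_Icc.mpr hzy)
  refine key.trans ?_
  have : 0 ≤ K / δ * Real.exp (-δ * y) := by positivity
  simp only [hBdef]
  linarith

lemma my_key {f f' : ℝ → ℂ} {K δ : ℝ} (hK : 0 ≤ K) (hδ : 0 < δ)
    (hf : ∀ y ∈ Set.Ici (1:ℝ), HasDerivWithinAt f (f' y) (Set.Ici 1) y)
    (hb : ∀ y ∈ Set.Ici (1:ℝ), ‖f' y‖ ≤ K * Real.exp (-δ * y)) :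
    ∃ l : ℂ, (∀ y ∈ Set.Ici (1:ℝ), ‖f y - l‖ ≤ K / δ * Real.exp (-δ * y)) ∧
      Tendsto f atTop (𝓝 l) := by
  have hcb := my_cauchy_bound hK hδ hf hb
  set u : ℕ → ℂ := fun n => f ((n : ℝ) + 1) with hu
  have hcauchy : CauchySeq u := by
    apply cauchySeq_of_le_geometric (Real.exp (-δ)) (K / δ * Real.exp (-δ))
      (Real.exp_lt_one_iff.mpr (by linarith))
    intro n
    have h1 : (1:ℝ) ≤ (n:ℝ) + 1 := by
      have := Nat.cast_nonneg (α := ℝ) n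
      linarith
    have h2 := hcb ((n:ℝ)+1) h1 ((n:ℝ)+1+1) (by linarith)
    have hdist : dist (u n) (u (n+1)) = ‖f ((n:ℝ)+1+1) - f ((n:ℝ)+1)‖ := by
      rw [dist_eq_norm, norm_sub_rev, hu]
      push_cast
      ring_nf
    rw [hdist]
    refine h2.trans (le_of_eq ?_)
    rw [mul_assoc]
    congr 1
    rw [← Real.exp_nat_mul, ← Real.exp_add]
    ring_nf
  obtain ⟨l, hl⟩ := cauchySeq_tendsto_of_complete hcauchy
  have hbound : ∀ y ∈ Set.Ici (1:ℝ), ‖f y - l‖ ≤ K / δ * Real.exp (-δ * y) := by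
    intro y hy
    have hlim : Tendsto (fun n => ‖f y - u n‖) atTop (𝓝 ‖f y - l‖) :=
      (tendsto_const_nhds.sub hl).norm
    apply le_of_tendsto hlim
    filter_upwards [eventually_ge_atTop ⌈y⌉₊] with n hn
    have hyn : y ≤ (n:ℝ) + 1 := by
      have := Nat.le_ceil y
      have h2 : (⌈y⌉₊ : ℝ) ≤ (n : ℝ) := by exact_mod_cast hn
      linarith
    have := hcb y hy ((n:ℝ)+1) hyn
    rw [norm_sub_rev]
    exact this
  refine ⟨l, hbound, ?_⟩
  rw [tendsto_iff_dist_tendsto_zero]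
  have hb0 : Tendsto (fun y : ℝ => K / δ * Real.exp (-δ * y)) atTop (𝓝 0) := by
    have h1 : Tendsto (fun y : ℝ => -δ * y) atTop atBot :=
      tendsto_id.const_mul_atTop_of_neg (by linarith)
    have := (Real.tendsto_exp_atBot.comp h1).const_mul (K / δ)
    simpa [Function.comp] using this
  apply squeeze_zero' (Filter.Eventually.of_forall fun y => dist_nonneg) _ hb0
  filter_upwards [eventually_ge_atTop (1:ℝ)] with y hy
  rw [dist_eq_norm]
  exact hbound y hy


/-- Quantitative ODE estimate for the zero-frequency Fourier coefficient: if
`a : [1, ∞) → ℂ` is twice differentiable with `|a″(y)| ≤ C·e^{−δy}` and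
`∫₁^∞ |a(y)|²·y^{−2} dy < ∞`, then `a` converges exponentially fast to a constant `a₀`. -/
theorem exp_convergence_of_ode_and_L2 (C δ : ℝ) (hC : 0 < C) (hδ : 0 < δ)
    (a a' a'' : ℝ → ℂ)
    (ha : ∀ y ∈ Set.Ici (1 : ℝ), HasDerivWithinAt a (a' y) (Set.Ici 1) y)
    (ha' : ∀ y ∈ Set.Ici (1 : ℝ), HasDerivWithinAt a' (a'' y) (Set.Ici 1) y)
    (hode : ∀ y ∈ Set.Ici (1 : ℝ), ‖a'' y‖ ≤ C * Real.exp (-δ * y))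
    (hL2 : IntegrableOn (fun y : ℝ => ‖a y‖ ^ 2 / y ^ 2) (Set.Ici 1)) :
    ∃ a₀ : ℂ, ∃ C' > 0, ∃ δ' > 0,
      (∀ y ∈ Set.Ici (1 : ℝ), ‖a y - a₀‖ ≤ C' * Real.exp (-δ' * y)) ∧
      Tendsto a atTop (nhds a₀) := by
  obtain ⟨L, hLbound, _⟩ := my_key hC.le hδ ha' hode
  have hL0 : L = 0 := by
    by_contra hL
    have hLpos : 0 < ‖L‖ := norm_pos_iff.mpr hL
    set F : ℝ → ℂ := fun t => a t - t • L with hF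
    have hF' : ∀ y ∈ Set.Ici (1:ℝ), HasDerivWithinAt F (a' y - L) (Set.Ici 1) y := by
      intro y hy
      have h1 : HasDerivAt (fun t : ℝ => t • L) L y := by
        simpa using (hasDerivAt_id y).smul_const L
      exact (ha y hy).sub h1.hasDerivWithinAt
    have hFb := my_cauchy_bound (K := C / δ) (by positivity) hδ hF' hLbound
    set M : ℝ := C / δ / δ * Real.exp (-δ * 1) + ‖F 1‖ with hM
    have hlow : ∀ y ∈ Set.Ici (1:ℝ), ‖L‖ * y - M ≤ ‖a y‖ := by
      intro y hy
      have h1 := hFb 1 Set.self_mem_Ici y hy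
      have h2 : ‖F y‖ ≤ M := by
        calc ‖F y‖ ≤ ‖F y - F 1‖ + ‖F 1‖ := by
              simpa using norm_add_le (F y - F 1) (F 1)
          _ ≤ M := by rw [hM]; linarith
      have h3 : ‖y • L‖ ≤ ‖a y‖ + ‖F y‖ := by
        calc ‖y • L‖ = ‖a y - F y‖ := by rw [hF]; ring_nf
          _ ≤ ‖a y‖ + ‖F y‖ := norm_sub_le _ _
      have h4 : ‖y • L‖ = ‖L‖ * y := by
        rw [norm_smul, Real.norm_eq_abs, abs_of_nonneg (by linarith [mem_Ici.mp hy]), mul_comm]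
      linarith
    set Y : ℝ := max 1 (2 * M / ‖L‖) with hY
    have hconst : Integrable (fun _ : ℝ => ‖L‖ ^ 2 / 4) (volume.restrict (Set.Ici Y)) := by
      apply Integrable.mono' (hL2.mono_set (Set.Ici_subset_Ici.mpr (le_max_left _ _)))
        aestronglyMeasurable_const
      filter_upwards [ae_restrict_mem measurableSet_Ici] with y hy
      have hy1 : (1:ℝ) ≤ y := le_trans (le_max_left _ _) hy
      have hy2 : 2 * M / ‖L‖ ≤ y := le_trans (le_max_right _ _) hy
      have h2M : 2 * M ≤ ‖L‖ * y := by
        rw [div_le_iff₀ hLpos] at hy2; linarith [hy2]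
      have h5 := hlow y hy1
      have h6 : ‖L‖ * y / 2 ≤ ‖a y‖ := by linarith
      rw [Real.norm_eq_abs, abs_of_nonneg (by positivity)]
      rw [div_le_div_iff₀ (by norm_num) (by positivity)]
      have h7 : (‖L‖ * y / 2) ^ 2 ≤ ‖a y‖ ^ 2 := pow_le_pow_left₀ (by positivity) h6 2
      nlinarith [h7]
    rw [integrable_const_iff] at hconst
    rcases hconst with h | h
    · exact hL (by simpa [pow_eq_zero_iff, norm_eq_zero] using h)
    · replace h := h.measure_univ_lt_top
      rw [Measure.restrict_apply_univ, Real.volume_Ici] at h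
      exact (lt_irrefl _ h).elim
  have ha'b : ∀ y ∈ Set.Ici (1:ℝ), ‖a' y‖ ≤ C / δ * Real.exp (-δ * y) := by
    intro y hy
    simpa [hL0] using hLbound y hy
  obtain ⟨a₀, h1, h2⟩ := my_key (K := C / δ) (by positivity) hδ ha ha'b
  exact ⟨a₀, C / δ / δ, by positivity, δ, hδ, h1, h2⟩
end
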